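/- (Truth-telling yields the Φ-mutual information) Let X, Y be finite sets, P a joint distribution on X×Y with marginals P_X, P_Y having full support, and Φ:[0,∞)→ℝ a continuous convex function with Φ(1)=0. Let K* : X×Y→ℝ satisfy K*(x,y) ∈ ∂Φ(P(x,y)/(P_X(x)P_Y(y))) for all (x,y). Then Σ_{x,y} P(x,y)K*(x,y) − Σ_{x,y} P_X(x)P_Y(y)Φ*(K*(x,y)) = D_Φ(P ‖ P_X⊗P_Y). -/

import Mathlib

open scoped BigOperators

/-- The set whose supremum defines the convex conjugate of `Φ` (with domain `[0,∞)`). -/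
def conjSet (Φ : ℝ → ℝ) (b : ℝ) : Set ℝ := {y | ∃ a : ℝ, 0 ≤ a ∧ y = a * b - Φ a}

/-- Convex conjugate `Φ*` of `Φ : [0,∞) → ℝ`. -/
noncomputable def conj (Φ : ℝ → ℝ) (b : ℝ) : ℝ := sSup (conjSet Φ b)

/-- The (effective) domain of the conjugate `Φ*`. -/
def domStar (Φ : ℝ → ℝ) : Set ℝ := {b | BddAbove (conjSet Φ b)}

/-- `b` is a subgradient of `Φ : [0,∞) → ℝ` at `a`. -/
def IsSubgradAt (Φ : ℝ → ℝ) (a b : ℝ) : Prop := ∀ c, 0 ≤ c → Φ a + b * (c - a) ≤ Φ c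

/-- Marginal on the first coordinate of a joint distribution `P` on `X × Y`. -/
noncomputable def margX {X Y : Type*} [Fintype Y] (P : X → Y → ℝ) (x : X) : ℝ := ∑ y, P x y

/-- Marginal on the second coordinate. -/
noncomputable def margY {X Y : Type*} [Fintype X] (P : X → Y → ℝ) (y : Y) : ℝ := ∑ x, P x y

/-- Point-wise ratio `P(x,y) / (P_X(x) P_Y(y))`. -/
noncomputable def ratio {X Y : Type*} [Fintype X] [Fintype Y] (P : X → Y → ℝ) (x : X) (y : Y) : ℝ :=
  P x y / (margX P x * margY P y)

/-- Φ-mutual information `D_Φ(P ‖ P_X ⊗ P_Y)` of a joint distribution on a finite space. -/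
noncomputable def phiMI {X Y : Type*} [Fintype X] [Fintype Y] (Φ : ℝ → ℝ) (P : X → Y → ℝ) : ℝ :=
  ∑ x, ∑ y, margX P x * margY P y * Φ (ratio P x y)

/-- Ex-ante truth-telling payment of the Φ-pairing mechanism with scoring function `K`. -/
noncomputable def payoff {X Y : Type*} [Fintype X] [Fintype Y]
    (Φ : ℝ → ℝ) (P : X → Y → ℝ) (K : X → Y → ℝ) : ℝ :=
  (∑ x, ∑ y, P x y * K x y) - ∑ x, ∑ y, margX P x * margY P y * conj Φ (K x y)

/-- Ex-ante payment to Alice in the Φ-pairing mechanism under strategies `θA, θB`. -/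
noncomputable def uA {X Y : Type*} [Fintype X] [Fintype Y]
    (Φ : ℝ → ℝ) (P : X → Y → ℝ) (θA : X → X → ℝ) (θB : Y → Y → ℝ) (K : X → Y → ℝ) : ℝ :=
  (∑ x, ∑ y, P x y * ∑ x', ∑ y', θA x x' * θB y y' * K x' y') -
    ∑ x, ∑ y, margX P x * margY P y * ∑ x', ∑ y', θA x x' * θB y y' * conj Φ (K x' y')

/-- Stochastic relevance: distinct signals induce distinct posteriors, for both agents. -/
def StochRelevant {X Y : Type*} [Fintype X] [Fintype Y] (P : X → Y → ℝ) : Prop :=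
  (∀ x x' : X, x ≠ x' → ∃ y, P x y / margX P x ≠ P x' y / margX P x') ∧
  (∀ y y' : Y, y ≠ y' → ∃ x, P x y / margY P y ≠ P x y' / margY P y')


lemma conj_eq_of_subgrad (Φ : ℝ → ℝ) {a b : ℝ} (ha : 0 ≤ a) (h : IsSubgradAt Φ a b) :
    conj Φ b = a * b - Φ a := by
  apply le_antisymm
  · refine csSup_le ⟨a * b - Φ a, a, ha, rfl⟩ ?_
    rintro y ⟨c, hc, rfl⟩
    have := h c hc
    nlinarith
  · apply le_csSup
    · refine ⟨a * b - Φ a, ?_⟩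
      rintro y ⟨c, hc, rfl⟩
      have := h c hc
      nlinarith
    · exact ⟨a, ha, rfl⟩

/-- Truth-telling with a `(P,Φ)`-ideal scoring function yields the Φ-mutual information. -/
theorem truthtelling_yields_phiMI {X Y : Type*} [Fintype X] [Fintype Y]
    (Φ : ℝ → ℝ) (hconv : ConvexOn ℝ (Set.Ici 0) Φ)
    (hcont : ContinuousOn Φ (Set.Ici 0)) (hΦ1 : Φ 1 = 0)
    (P : X → Y → ℝ) (hP0 : ∀ x y, 0 ≤ P x y) (hP1 : ∑ x, ∑ y, P x y = 1)
    (hPX : ∀ x, 0 < margX P x) (hPY : ∀ y, 0 < margY P y)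
    (K : X → Y → ℝ) (hK : ∀ x y, IsSubgradAt Φ (ratio P x y) (K x y)) :
    payoff Φ P K = phiMI Φ P := by
  unfold payoff phiMI
  rw [← Finset.sum_sub_distrib]
  refine Finset.sum_congr rfl fun x _ => ?_
  rw [← Finset.sum_sub_distrib]
  refine Finset.sum_congr rfl fun y _ => ?_
  have hm : 0 < margX P x * margY P y := mul_pos (hPX x) (hPY y)
  have har : 0 ≤ ratio P x y := div_nonneg (hP0 x y) hm.le
  rw [conj_eq_of_subgrad Φ har (hK x y)]
  have hPxy : P x y = margX P x * margY P y * ratio P x y := by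
    rw [ratio, mul_div_assoc']
    exact (mul_div_cancel_left₀ (P x y) hm.ne').symm
  rw [hPxy]; ring
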